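/- Let L be a finite-dimensional Lie algebra over a field k, minimally generated by n elements x_1, ..., x_n, and suppose Z(L) = L' has dimension m. Let {y_1, ..., y_m} be a basis of L', and for 1 ≤ r ≤ m let X_r ∈ M_n(k) be the matrix whose (i,j) entry is γ_{ijr}, where [x_i, x_j] = γ_{ij1} y_1 + ... + γ_{ijm} y_m; each X_r is skew-symmetric. Then L is a Camina Lie algebra if and only if for all scalars ξ_1, ..., ξ_m ∈ k, singularity of ξ_1 X_1 + ... + ξ_m X_m implies ξ_1 = ... = ξ_m = 0; equivalently, if and only if the span of X_1, ..., X_m is an m-dimensional rank-n subspace of M_n(k) consisting of skew-symmetric matrices. -/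

import Mathlib

/- Common definitions: breadth, breadth type, derived subalgebra, Camina Lie algebras,
nilpotency class, minimal generation, and free nilpotent Lie algebras. -/

open Module Matrix

section Defs

variable (k : Type*) [Field k]

/-- The breadth of an element `x` of a Lie algebra: the rank of the adjoint map `ad x`
(equivalently, the codimension of the centralizer of `x`). -/
noncomputable def breadth (L : Type*) [LieRing L] [LieAlgebra k L] (x : L) : ℕ :=
  Module.finrank k (LinearMap.range (LieAlgebra.ad k L x))

/-- A Lie algebra has breadth type `S` if `S` is exactly the set of breadths of its elements. -/
def HasBreadthType (L : Type*) [LieRing L] [LieAlgebra k L] (S : Set ℕ) : Prop :=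
  Set.range (breadth k L) = S

/-- The derived subalgebra `L' = [L, L]` as a Lie ideal. -/
abbrev derivedIdeal (L : Type*) [LieRing L] [LieAlgebra k L] : LieIdeal k L :=
  ⁅(⊤ : LieIdeal k L), (⊤ : LieIdeal k L)⁆

lemma lie_mem_derivedIdeal (L : Type*) [LieRing L] [LieAlgebra k L] (x y : L) :
    ⁅x, y⁆ ∈ derivedIdeal k L :=
  LieSubmodule.lie_mem_lie (LieSubmodule.mem_top x) (LieSubmodule.mem_top y)

/-- A Camina Lie algebra: `[x, L] = L'` for every `x ∈ L \ L'`. -/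
def IsCamina (L : Type*) [LieRing L] [LieAlgebra k L] : Prop :=
  ∀ x : L, x ∉ derivedIdeal k L →
    LinearMap.range (LieAlgebra.ad k L x) = (derivedIdeal k L).toSubmodule

/-- A Lie algebra is nilpotent of class exactly `c`. -/
def IsNilpotentOfClass (L : Type*) [LieRing L] [LieAlgebra k L] (c : ℕ) : Prop :=
  LieModule.lowerCentralSeries k L L c = ⊥ ∧ ∀ b < c, LieModule.lowerCentralSeries k L L b ≠ ⊥

/-- A Lie algebra is minimally generated by `n` elements: some `n` elements generate it
and no fewer elements generate it. -/
def MinimallyGenerated (L : Type*) [LieRing L] [LieAlgebra k L] (n : ℕ) : Prop :=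
  (∃ s : Finset L, s.card = n ∧ LieSubalgebra.lieSpan k L ↑s = ⊤) ∧
  ∀ s : Finset L, LieSubalgebra.lieSpan k L ↑s = ⊤ → n ≤ s.card

/-- The free `c`-step nilpotent Lie algebra on `n` generators: the quotient of the free
Lie algebra on `n` generators by the `(c+1)`-st term `γ_{c+1}` of its lower central series. -/
abbrev FreeNilp (c n : ℕ) :=
  FreeLieAlgebra k (Fin n) ⧸
    LieModule.lowerCentralSeries k (FreeLieAlgebra k (Fin n)) (FreeLieAlgebra k (Fin n)) c

/-- The canonical generators of the free `c`-step nilpotent Lie algebra on `n` generators. -/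
noncomputable def gen (c n : ℕ) (i : Fin n) : FreeNilp k c n :=
  LieSubmodule.Quotient.mk
    (N := LieModule.lowerCentralSeries k (FreeLieAlgebra k (Fin n)) (FreeLieAlgebra k (Fin n)) c)
    (FreeLieAlgebra.of k i)

end Defs

section Aux


lemma auxF {k : Type*} [Field k] {m n : ℕ} (A : Matrix (Fin m) (Fin n) k) :
    Function.Surjective A.mulVecLin ↔ ∀ ξ : Fin m → k, A.vecMul ξ = 0 → ξ = 0 := by
  constructor
  · intro hs ξ h0
    funext r
    obtain ⟨v, hv⟩ := hs (Pi.single r 1)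
    have : ξ ⬝ᵥ (A.mulVec v) = ξ ⬝ᵥ Pi.single r 1 := by rw [show A.mulVec v = Pi.single r 1 from hv]
    rw [Matrix.dotProduct_mulVec, h0] at this
    simpa [zero_dotProduct, dotProduct_single] using this.symm
  · intro h
    have hinj : Function.Injective Aᵀ.mulVecLin := by
      rw [← LinearMap.ker_eq_bot, Submodule.eq_bot_iff]
      intro ξ hξ
      exact h ξ (by simpa [Matrix.mulVec_transpose] using hξ)
    have hr : Aᵀ.rank = m := by
      rw [Matrix.rank]
      rw [LinearMap.finrank_range_of_inj hinj]
      simp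
    have hr2 : A.rank = m := by rw [← Matrix.rank_transpose, hr]
    rw [← LinearMap.range_eq_top]
    apply Submodule.eq_top_of_finrank_eq
    rw [← Matrix.rank, hr2]
    simp

variable (k : Type*) [Field k] (L : Type*) [LieRing L] [LieAlgebra k L] [FiniteDimensional k L]
    (n m : ℕ)
    (x : Fin n → L) (hgen : LieSubalgebra.lieSpan k L (Set.range x) = ⊤)
    (hZ : LieAlgebra.center k L = derivedIdeal k L)

section
variable {k L n}
include hZ in
omit [FiniteDimensional k L] in
lemma h0 : ∀ z ∈ derivedIdeal k L, ∀ v : L, ⁅z, v⁆ = 0 := by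
  intro z hz v
  rw [← hZ] at hz
  rw [LieModule.mem_maxTrivSubmodule] at hz
  rw [← neg_eq_zero, ← lie_skew]
  simp [hz v]

include hgen in
omit [FiniteDimensional k L] in
lemma hVD : Submodule.span k (Set.range x) ⊔ (derivedIdeal k L).toSubmodule = ⊤ := by
  set W := Submodule.span k (Set.range x) ⊔ (derivedIdeal k L).toSubmodule with hW
  let S : LieSubalgebra k L :=
    { toSubmodule := W
      lie_mem' := fun {a b} _ _ => le_sup_right (α := Submodule k L) (lie_mem_derivedIdeal k L a b) }
  have hx : Set.range x ⊆ S := fun a ha => le_sup_left (α := Submodule k L) (Submodule.subset_span ha)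
  have := LieSubalgebra.lieSpan_le.mpr hx
  rw [hgen] at this
  refine le_antisymm le_top ?_
  intro a _
  exact this (LieSubalgebra.mem_top a)
end

section
variable {k L n}

include hZ in
omit [FiniteDimensional k L] in
lemma hgen' (S : Set L)
    (hS : Submodule.span k S ⊔ (derivedIdeal k L).toSubmodule = ⊤) :
    LieSubalgebra.lieSpan k L S = ⊤ := by
  set P := LieSubalgebra.lieSpan k L S with hP
  have hSP : Submodule.span k S ≤ P.toSubmodule :=
    Submodule.span_le.mpr (LieSubalgebra.subset_lieSpan)
  have hDP : (derivedIdeal k L).toSubmodule ≤ P.toSubmodule := by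
    rw [LieSubmodule.lieIdeal_oper_eq_linear_span']
    rw [Submodule.span_le]
    rintro w ⟨a, -, b, -, rfl⟩
    -- decompose a and b
    obtain ⟨va, hva, za, hza, rfl⟩ := Submodule.mem_sup.mp (hS ▸ Submodule.mem_top (x := a))
    obtain ⟨vb, hvb, zb, hzb, rfl⟩ := Submodule.mem_sup.mp (hS ▸ Submodule.mem_top (x := b))
    have e1 : ⁅za, vb⁆ = 0 := h0 hZ za hza vb
    have e2 : ⁅za, zb⁆ = 0 := h0 hZ za hza zb
    have e3 : ⁅va, zb⁆ = 0 := by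
      rw [← neg_eq_zero, ← lie_skew]; simp [h0 hZ zb hzb va]
    have : ⁅va + za, vb + zb⁆ = ⁅va, vb⁆ := by
      rw [add_lie, lie_add, lie_add, e1, e2, e3]; abel
    rw [this]
    exact P.lie_mem (hSP hva) (hSP hvb)
  have : P.toSubmodule = ⊤ := by
    refine le_antisymm le_top ?_
    rw [← hS]
    exact sup_le hSP hDP
  rw [← LieSubalgebra.toSubmodule_inj]
  simpa using this

end

section
variable {k L n}

variable (hmin : MinimallyGenerated k L n)

include hgen hmin in
omit [FiniteDimensional k L] in
lemma hinjx : Function.Injective x := by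
  classical
  have hs : LieSubalgebra.lieSpan k L ↑(Finset.image x Finset.univ) = ⊤ := by
    rwa [Finset.coe_image, Finset.coe_univ, Set.image_univ]
  have h1 : n ≤ (Finset.image x Finset.univ).card := hmin.2 _ hs
  have h2 : (Finset.image x Finset.univ).card ≤ n := by
    calc (Finset.image x Finset.univ).card ≤ (Finset.univ : Finset (Fin n)).card :=
          Finset.card_image_le
      _ = n := by simp
  have : (Finset.image x Finset.univ).card = (Finset.univ : Finset (Fin n)).card := by
    simp [le_antisymm h2 h1]
  rw [Finset.card_image_iff] at this
  intro a b hab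
  exact this (Finset.mem_univ a) (Finset.mem_univ b) hab

include hgen hmin hZ in
omit [FiniteDimensional k L] in
lemma hindep (c : Fin n → k) (hc : (∑ i, c i • x i) ∈ derivedIdeal k L) : c = 0 := by
  classical
  by_contra hne
  obtain ⟨j, hj⟩ : ∃ j, c j ≠ 0 := by
    by_contra h; push_neg at h; exact hne (funext h)
  set S : Set L := x '' {i | i ≠ j} with hS
  have hxj : x j ∈ Submodule.span k S ⊔ (derivedIdeal k L).toSubmodule := by
    have hsum : (∑ i, c i • x i) = c j • x j + ∑ i ∈ Finset.univ.erase j, c i • x i := by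
      exact (Finset.add_sum_erase _ _ (Finset.mem_univ j)).symm
    have hrest : (∑ i ∈ Finset.univ.erase j, c i • x i) ∈ Submodule.span k S := by
      refine Submodule.sum_mem _ fun i hi => Submodule.smul_mem _ _ (Submodule.subset_span ?_)
      exact ⟨i, Finset.ne_of_mem_erase hi, rfl⟩
    have : c j • x j = (∑ i, c i • x i) - ∑ i ∈ Finset.univ.erase j, c i • x i := by
      rw [hsum]; abel
    have hmem : c j • x j ∈ Submodule.span k S ⊔ (derivedIdeal k L).toSubmodule := by
      rw [this]
      exact Submodule.sub_mem _ (Submodule.mem_sup_right hc) (Submodule.mem_sup_left hrest)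
    have := Submodule.smul_mem _ (c j)⁻¹ hmem
    rwa [inv_smul_smul₀ hj] at this
  have hsup : Submodule.span k S ⊔ (derivedIdeal k L).toSubmodule = ⊤ := by
    refine le_antisymm le_top ?_
    rw [← hVD x hgen]
    refine sup_le ?_ le_sup_right
    rw [Submodule.span_le]
    rintro a ⟨i, rfl⟩
    by_cases hij : i = j
    · subst hij; exact hxj
    · exact Submodule.mem_sup_left (Submodule.subset_span ⟨i, hij, rfl⟩)
  have htop := hgen' hZ S hsup
  have hScoe : S = ↑(Finset.image x (Finset.univ.erase j)) := by
    rw [Finset.coe_image, Finset.coe_erase, Finset.coe_univ]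
    ext i
    constructor
    · rintro ⟨a, ha, rfl⟩
      exact ⟨a, by simp [Set.mem_setOf_eq.mp ha], rfl⟩
    · rintro ⟨a, ha, rfl⟩
      exact ⟨a, by simpa using ha, rfl⟩
  rw [hScoe] at htop
  have hcard := hmin.2 _ htop
  rw [Finset.card_image_of_injective _ (hinjx x hgen hmin), Finset.card_erase_of_mem (Finset.mem_univ j),
    Finset.card_univ, Fintype.card_fin] at hcard
  have hn : 0 < n := j.pos
  omega
end

lemma lie_sum' {k : Type*} [CommRing k] {L : Type*} [LieRing L] [LieAlgebra k L]
    (a : L) {ι : Type*} (s : Finset ι) (f : ι → L) :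
    ⁅a, ∑ i ∈ s, f i⁆ = ∑ i ∈ s, ⁅a, f i⁆ :=
  map_sum (LieAlgebra.ad k L a) f s

lemma sum_lie' {L : Type*} [LieRing L]
    (b : L) {ι : Type*} [DecidableEq ι] (s : Finset ι) (f : ι → L) :
    ⁅∑ i ∈ s, f i, b⁆ = ∑ i ∈ s, ⁅f i, b⁆ := by
  induction s using Finset.cons_induction with
  | empty => simp
  | cons i s hi ih => rw [Finset.sum_cons, Finset.sum_cons, add_lie, ih]

section
variable {k L n m}
variable (y : Basis (Fin m) k (derivedIdeal k L))
    (X : Fin m → Matrix (Fin n) (Fin n) k)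
    (hX : ∀ r i j, X r i j = y.repr ⟨⁅x i, x j⁆, lie_mem_derivedIdeal k L (x i) (x j)⟩ r)

include hgen hZ hX in
lemma hbr (c : Fin n → k) (z : L) (hz : z ∈ derivedIdeal k L) :
    LinearMap.range (LieAlgebra.ad k L ((∑ i, c i • x i) + z)) = (derivedIdeal k L).toSubmodule ↔
      Function.Surjective (Matrix.of fun r j => ∑ i, c i * X r i j).mulVecLin := by
  classical
  set a := (∑ i, c i • x i) + z with ha
  set A : Matrix (Fin m) (Fin n) k := Matrix.of fun r j => ∑ i, c i * X r i j with hA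
  have hax : ∀ v ∈ derivedIdeal k L, ⁅a, v⁆ = 0 := by
    intro v hv
    rw [← neg_eq_zero, ← lie_skew]
    simp [h0 hZ v hv a]
  have haj : ∀ j, ⁅a, x j⁆ = ∑ i, c i • ⁅x i, x j⁆ := by
    intro j
    rw [ha, add_lie, h0 hZ z hz (x j), add_zero, sum_lie' (x j)]
    exact Finset.sum_congr rfl fun i _ => smul_lie _ _ _
  set d : Fin n → (derivedIdeal k L) := fun j =>
    ⟨∑ i, c i • ⁅x i, x j⁆,
      Submodule.sum_mem _ fun i _ =>
        Submodule.smul_mem _ _ (lie_mem_derivedIdeal k L (x i) (x j))⟩ with hd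
  have hrange : LinearMap.range (LieAlgebra.ad k L a) =
      Submodule.span k (Set.range fun j => ((d j : L))) := by
    apply le_antisymm
    · rintro _ ⟨b, rfl⟩
      obtain ⟨v, hv, w, hw, rfl⟩ := Submodule.mem_sup.mp
        ((hVD x hgen).symm ▸ Submodule.mem_top (x := b))
      obtain ⟨e, rfl⟩ := (Submodule.mem_span_range_iff_exists_fun k).mp hv
      have : LieAlgebra.ad k L a ((∑ j, e j • x j) + w) = ∑ j, e j • (d j : L) := by
        simp only [LieAlgebra.ad_apply, lie_add, hax w hw, add_zero]
        rw [lie_sum' (k := k) a]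
        apply Finset.sum_congr rfl
        intro j _
        rw [lie_smul, haj j]
      rw [this]
      exact Submodule.sum_mem _ fun j _ =>
        Submodule.smul_mem _ _ (Submodule.subset_span ⟨j, rfl⟩)
    · rw [Submodule.span_le]
      rintro _ ⟨j, rfl⟩
      exact ⟨x j, by simp [LieAlgebra.ad_apply, haj j, hd]⟩
  rw [hrange]
  -- push to the subtype
  have hsub : Submodule.span k (Set.range fun j => ((d j : L))) =
      Submodule.map (derivedIdeal k L).toSubmodule.subtype (Submodule.span k (Set.range d)) := by
    rw [Submodule.map_span]
    congr 1
    rw [← Set.range_comp]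
    rfl
  rw [hsub]
  have hkey : Submodule.map (derivedIdeal k L).toSubmodule.subtype
        (Submodule.span k (Set.range d)) = (derivedIdeal k L).toSubmodule ↔
      Submodule.span k (Set.range d) = ⊤ := by
    constructor
    · intro h
      apply Submodule.map_injective_of_injective
        (Submodule.injective_subtype (derivedIdeal k L).toSubmodule)
      rw [h, Submodule.map_subtype_top]
    · intro h
      rw [h, Submodule.map_subtype_top]
  rw [hkey]
  -- now transfer along y.equivFun
  have hcoord : (⇑(y.equivFun) ∘ d) = fun j => Aᵀ j := by
    funext j
    have hdj : d j = ∑ i, c i • ⟨⁅x i, x j⁆, lie_mem_derivedIdeal k L (x i) (x j)⟩ := by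
      apply Subtype.ext
      simp [hd]
    funext r
    simp only [Function.comp_apply, Basis.equivFun_apply]
    rw [hdj]
    simp only [map_sum, _root_.map_smul, Finsupp.coe_finset_sum, Finsupp.coe_smul, Finset.sum_apply,
      Pi.smul_apply, smul_eq_mul]
    rw [hA]
    simp only [Matrix.transpose_apply, Matrix.of_apply]
    exact Finset.sum_congr rfl fun i _ => by rw [hX r i j]
  have h1 : Submodule.span k (Set.range fun j => Aᵀ j) =
      Submodule.map (y.equivFun : _ →ₗ[k] (Fin m → k)) (Submodule.span k (Set.range d)) := by
    rw [← hcoord, Set.range_comp, Submodule.map_span]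
    simp only [LinearEquiv.coe_coe]
  have hspan2 : Submodule.span k (Set.range d) = ⊤ ↔
      Submodule.span k (Set.range fun j => Aᵀ j) = ⊤ := by
    rw [h1]
    constructor
    · intro h
      rw [h, Submodule.map_top]
      exact LinearEquiv.range _
    · intro h
      apply Submodule.map_injective_of_injective
        (f := (y.equivFun : _ →ₗ[k] (Fin m → k))) y.equivFun.injective
      rw [h, Submodule.map_top]
      exact (LinearEquiv.range _).symm
  rw [hspan2, show (Set.range fun j => Aᵀ j) = Set.range A.col from rfl, ← Matrix.range_mulVecLin, LinearMap.range_eq_top]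
end

section
variable {k L n m}
variable (y : Basis (Fin m) k (derivedIdeal k L))
    (X : Fin m → Matrix (Fin n) (Fin n) k)
    (hX : ∀ r i j, X r i j = y.repr ⟨⁅x i, x j⁆, lie_mem_derivedIdeal k L (x i) (x j)⟩ r)
    (hmin : MinimallyGenerated k L n)

omit [FiniteDimensional k L] in
lemma hAc (c : Fin n → k) (ξ : Fin m → k) :
    (Matrix.of fun r j => ∑ i, c i * X r i j).vecMul ξ = (∑ r, ξ r • X r).vecMul c := by
  funext j
  simp only [Matrix.vecMul, dotProduct, Matrix.of_apply, Finset.mul_sum,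
    Matrix.sum_apply, Matrix.smul_apply, Pi.smul_apply, smul_eq_mul]
  rw [Finset.sum_comm]
  exact Finset.sum_congr rfl fun i _ => Finset.sum_congr rfl fun r _ => by ring

include hgen hZ hX hmin in
lemma main2 : IsCamina k L ↔ ∀ ξ : Fin m → k, (∑ r, ξ r • X r).det = 0 → ξ = 0 := by
  constructor
  · intro hC ξ hdet
    by_contra hξ
    obtain ⟨c, hc0, hcv⟩ := Matrix.exists_vecMul_eq_zero_iff.mpr hdet
    have hnotin : (∑ i, c i • x i) ∉ derivedIdeal k L := fun h => hc0 (hindep x hgen hZ hmin c h)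
    have h1 := hC _ hnotin
    have h2 : LinearMap.range (LieAlgebra.ad k L ((∑ i, c i • x i) + 0)) =
        (derivedIdeal k L).toSubmodule := by rw [add_zero]; exact h1
    have h3 := (hbr x hgen hZ y X hX c 0 (zero_mem _)).mp h2
    have h4 := (auxF _).mp h3 ξ (by rw [hAc X c ξ, hcv])
    exact hξ h4
  · intro h a ha
    obtain ⟨v, hv, z, hz, rfl⟩ := Submodule.mem_sup.mp
      ((hVD x hgen).symm ▸ Submodule.mem_top (x := a))
    obtain ⟨c, rfl⟩ := (Submodule.mem_span_range_iff_exists_fun k).mp hv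
    have hc0 : c ≠ 0 := by
      rintro rfl
      exact ha (by simpa using hz)
    rw [hbr x hgen hZ y X hX c z hz, auxF]
    intro ξ hv0
    rw [hAc X c ξ] at hv0
    exact h ξ (Matrix.exists_vecMul_eq_zero_iff.mp ⟨c, hc0, hv0⟩)
end

section
variable {k L n m}
variable (y : Basis (Fin m) k (derivedIdeal k L))
    (X : Fin m → Matrix (Fin n) (Fin n) k)
    (hX : ∀ r i j, X r i j = y.repr ⟨⁅x i, x j⁆, lie_mem_derivedIdeal k L (x i) (x j)⟩ r)
    (hmin : MinimallyGenerated k L n)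

include hX in
omit [FiniteDimensional k L] in
lemma hskewX : ∀ r, (X r)ᵀ = -(X r) := by
  intro r
  ext i j
  rw [Matrix.transpose_apply, Matrix.neg_apply, hX r i j, hX r j i]
  have : (⟨⁅x j, x i⁆, lie_mem_derivedIdeal k L (x j) (x i)⟩ : derivedIdeal k L) =
      -⟨⁅x i, x j⁆, lie_mem_derivedIdeal k L (x i) (x j)⟩ := by
    apply Subtype.ext
    rw [show ((-⟨⁅x i, x j⁆, lie_mem_derivedIdeal k L (x i) (x j)⟩ : derivedIdeal k L) : L) = -(⁅x i, x j⁆ : L) from rfl]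
    exact (lie_skew (x j) (x i)).symm
  rw [this, map_neg]
  simp

include hgen hZ hX hmin in
lemma main3 (hdim : finrank k (derivedIdeal k L) = m) :
    IsCamina k L ↔
      (finrank k (Submodule.span k (Set.range X)) = m ∧
       (∀ A ∈ Submodule.span k (Set.range X), Aᵀ = -A) ∧
       (∀ A ∈ Submodule.span k (Set.range X), A ≠ 0 → IsUnit A)) := by
  rw [main2 x hgen hZ y X hX hmin]
  by_cases hn : n = 0
  · subst hn
    have hL0 : ∀ a : L, a = 0 := by
      intro a
      have hx : Set.range x = ∅ := by simp
      have hle : LieSubalgebra.lieSpan k L (Set.range x) ≤ ⊥ :=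
        LieSubalgebra.lieSpan_le.mpr (by rw [hx]; exact Set.empty_subset _)
      rw [hgen] at hle
      exact (LieSubalgebra.mem_bot (R := k) (L := L) a).mp (hle (LieSubalgebra.mem_top a))
    haveI : Subsingleton L := ⟨fun a b => by rw [hL0 a, hL0 b]⟩
    have hm0 : m = 0 := by
      rw [← hdim]
      exact Module.finrank_zero_of_subsingleton
    subst hm0
    have hXe : Set.range X = ∅ := by simp
    constructor
    · intro _
      refine ⟨by simp [hXe], ?_, ?_⟩
      · intro A hA
        rw [hXe, Submodule.span_empty, Submodule.mem_bot] at hA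
        simp [hA]
      · intro A hA hA0
        rw [hXe, Submodule.span_empty, Submodule.mem_bot] at hA
        exact absurd hA hA0
    · intro _ ξ _
      exact funext fun r => r.elim0
  · haveI : Nonempty (Fin n) := ⟨⟨0, Nat.pos_of_ne_zero hn⟩⟩
    constructor
    · intro hdet
      have hli : LinearIndependent k X := by
        rw [Fintype.linearIndependent_iff]
        intro ξ hξ r
        have h0 : (∑ r, ξ r • X r).det = 0 := by
          rw [hξ]; exact Matrix.det_zero
        exact congrFun (hdet ξ h0) r
      refine ⟨?_, ?_, ?_⟩
      · rw [finrank_span_eq_card hli, Fintype.card_fin]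
      · intro A hA
        induction hA using Submodule.span_induction with
        | mem a ha =>
          obtain ⟨r, rfl⟩ := ha
          exact hskewX x y X hX r
        | zero => simp
        | add a b _ _ ha hb => rw [Matrix.transpose_add, ha, hb, neg_add]
        | smul t a _ ha => rw [Matrix.transpose_smul, ha, smul_neg]
      · intro A hA hA0
        obtain ⟨ξ, rfl⟩ := (Submodule.mem_span_range_iff_exists_fun k).mp hA
        have hdet0 : (∑ r, ξ r • X r).det ≠ 0 := fun h0 => hA0 (by rw [hdet ξ h0]; simp)
        exact (Matrix.isUnit_iff_isUnit_det _).mpr (isUnit_iff_ne_zero.mpr hdet0)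
    · rintro ⟨hfr, _, hu⟩ ξ hdet0
      have hli : LinearIndependent k X := by
        rw [linearIndependent_iff_card_eq_finrank_span, Fintype.card_fin]
        exact hfr.symm
      have hmem : (∑ r, ξ r • X r) ∈ Submodule.span k (Set.range X) :=
        Submodule.sum_mem _ fun r _ => Submodule.smul_mem _ _ (Submodule.subset_span ⟨r, rfl⟩)
      have hz : (∑ r, ξ r • X r) = 0 := by
        by_contra h0
        exact ((Matrix.isUnit_iff_isUnit_det _).mp (hu _ hmem h0)).ne_zero hdet0
      exact funext (Fintype.linearIndependent_iff.mp hli ξ hz)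
end

end Aux

/-- structure-constant criterion for Camina Lie algebras. If `L` is minimally
generated by `x_1, …, x_n`, `Z(L) = L'` has dimension `m` with basis `y_1, …, y_m`, and
`X_r` is the matrix with `(i,j)` entry `γ_{ijr}` where `[x_i, x_j] = Σ_r γ_{ijr} y_r`, then
each `X_r` is skew-symmetric, and `L` is Camina iff every nontrivial linear combination of
the `X_r` is nonsingular, iff the span of the `X_r` is an `m`-dimensional rank-`n` subspace
of `M_n(k)` consisting of skew-symmetric matrices. -/
theorem camina_iff_structure_matrices
    (k : Type*) [Field k] (L : Type*) [LieRing L] [LieAlgebra k L] [FiniteDimensional k L]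
    (n m : ℕ)
    (x : Fin n → L) (hgen : LieSubalgebra.lieSpan k L (Set.range x) = ⊤)
    (hmin : MinimallyGenerated k L n)
    (hZ : LieAlgebra.center k L = derivedIdeal k L)
    (hdim : finrank k (derivedIdeal k L) = m)
    (y : Basis (Fin m) k (derivedIdeal k L))
    (X : Fin m → Matrix (Fin n) (Fin n) k)
    (hX : ∀ r i j, X r i j = y.repr ⟨⁅x i, x j⁆, lie_mem_derivedIdeal k L (x i) (x j)⟩ r) :
    (∀ r, (X r)ᵀ = -(X r)) ∧
    (IsCamina k L ↔ ∀ ξ : Fin m → k, (∑ r, ξ r • X r).det = 0 → ξ = 0) ∧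
    (IsCamina k L ↔
      (finrank k (Submodule.span k (Set.range X)) = m ∧
       (∀ A ∈ Submodule.span k (Set.range X), Aᵀ = -A) ∧
       (∀ A ∈ Submodule.span k (Set.range X), A ≠ 0 → IsUnit A))) :=
  ⟨hskewX x y X hX, main2 x hgen hZ y X hX hmin, main3 x hgen hZ y X hX hmin hdim⟩
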